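/- Let h : ℝ → ℂ be measurable with ∫_ℝ h(t) dt = 1 and |h(t)| ≤ C₁(1 + |t|)^{−3} for all t ∈ ℝ. Then there exists C > 0 such that for all λ ≥ 1, | ∫_{−λ}^{λ} ∫_ℝ h(t − r) · r·tanh(πr) dr dt − λ² | ≤ Cλ. -/

import Mathlib

open Real MeasureTheory

lemma hasDerivAt_mul_abs (x : ℝ) : HasDerivAt (fun y : ℝ => y * |y| / 2) |x| x := by
  rcases lt_trichotomy x 0 with hx | rfl | hx
  · have h1 : HasDerivAt (fun y : ℝ => -(y * y) / 2) |x| x := by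
      have := ((hasDerivAt_id x).mul (hasDerivAt_id x)).neg.div_const 2
      simpa [abs_of_neg hx] using this.congr_deriv (by simp [id]; try ring)
    apply h1.congr_of_eventuallyEq
    filter_upwards [Iio_mem_nhds hx] with y hy
    rw [abs_of_neg hy]; ring
  · rw [hasDerivAt_iff_tendsto_slope]
    have hb : ∀ y : ℝ, ‖slope (fun y : ℝ => y * |y| / 2) 0 y‖ ≤ |y| := by
      intro y
      by_cases hy : y = 0
      · simp [hy, slope]
      · have : slope (fun y : ℝ => y * |y| / 2) 0 y = |y| / 2 := by
          rw [slope_def_field]; field_simp; ring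
        rw [this, Real.norm_eq_abs, abs_of_nonneg (by positivity)]
        have := abs_nonneg y; linarith
    have habs : Filter.Tendsto (fun y : ℝ => |y|) (nhdsWithin 0 {(0:ℝ)}ᶜ) (nhds 0) := by
      have h2 := (continuous_abs.tendsto (0:ℝ)).mono_left
        (nhdsWithin_le_nhds (s := {(0:ℝ)}ᶜ))
      simpa using h2
    simpa using squeeze_zero_norm hb habs
  · have h1 : HasDerivAt (fun y : ℝ => y * y / 2) |x| x := by
      have := ((hasDerivAt_id x).mul (hasDerivAt_id x)).div_const 2
      simpa [abs_of_pos hx] using this.congr_deriv (by simp [id]; try ring)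
    apply h1.congr_of_eventuallyEq
    filter_upwards [Ioi_mem_nhds hx] with y hy
    rw [abs_of_pos hy]

lemma integral_abs_eq (a b : ℝ) : ∫ t in a..b, |t| = b * |b| / 2 - a * |a| / 2 :=
  intervalIntegral.integral_eq_sub_of_hasDerivAt (fun x _ => hasDerivAt_mul_abs x)
    (continuous_abs.intervalIntegrable a b)

lemma abs_tanh_le_one (x : ℝ) : |Real.tanh x| ≤ 1 := by
  rw [Real.tanh_eq_sinh_div_cosh, abs_div, abs_of_pos (Real.cosh_pos x),
    div_le_one (Real.cosh_pos x), Real.abs_sinh]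
  calc Real.sinh |x| ≤ Real.cosh |x| := (Real.sinh_lt_cosh _).le
    _ = Real.cosh x := Real.cosh_abs x

lemma tanh_close_aux {x : ℝ} (hx : 0 ≤ x) : |x * Real.tanh (π * x) - x| ≤ 1 := by
  set t := π * x with ht
  have ht0 : 0 ≤ t := by positivity
  have hc := Real.cosh_pos t
  have h1 : Real.tanh t ≤ 1 := le_trans (le_abs_self _) (abs_tanh_le_one t)
  have hE : (0:ℝ) < Real.exp t := Real.exp_pos t
  have h2 : 1 - Real.tanh t = Real.exp (-t) / Real.cosh t := by
    rw [Real.tanh_eq_sinh_div_cosh, ← Real.cosh_sub_sinh]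
    field_simp
  have h3 : x * (1 - Real.tanh t) = 2 * x / (Real.exp t ^ 2 + 1) := by
    rw [h2, Real.cosh_eq, Real.exp_neg]
    field_simp
  have h4 : x * (1 - Real.tanh t) ≤ 1 := by
    rw [h3, div_le_one (by positivity)]
    have h5 : 1 + 2 * t ≤ Real.exp t ^ 2 := by
      calc 1 + 2 * t = 2 * t + 1 := by ring
        _ ≤ Real.exp (2 * t) := Real.add_one_le_exp (2 * t)
        _ = Real.exp t ^ 2 := by rw [two_mul, Real.exp_add, sq]
    nlinarith [Real.pi_gt_three]
  have h6 : 0 ≤ x * (1 - Real.tanh t) := by nlinarith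
  rw [abs_le]
  constructor <;> nlinarith

lemma tanh_close (x : ℝ) : abs (x * Real.tanh (π * x) - |x|) ≤ 1 := by
  rcases le_or_gt 0 x with hx | hx
  · rw [abs_of_nonneg hx]; exact tanh_close_aux hx
  · have h := tanh_close_aux (neg_nonneg.mpr hx.le)
    rw [abs_of_neg hx]
    have : -x * Real.tanh (π * -x) = x * Real.tanh (π * x) := by
      rw [mul_neg, Real.tanh_neg]; ring
    rw [this] at h
    convert h using 2

lemma phi_close {lam u : ℝ} (hlam : 1 ≤ lam) :
    abs ((lam - u) * |lam - u| / 2 - (-lam - u) * |-lam - u| / 2 - lam ^ 2)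
      ≤ 2 * lam * |u| := by
  have e : -lam - u = -(lam + u) := by ring
  rw [e, abs_neg]
  rcases le_or_gt 0 (lam - u) with h1 | h1 <;> rcases le_or_gt 0 (lam + u) with h2 | h2
  · rw [abs_of_nonneg h1, abs_of_nonneg h2]
    have hu : |u| ≤ lam := abs_le.mpr ⟨by linarith, by linarith⟩
    have e2 : (lam - u) * (lam - u) / 2 - -(lam + u) * (lam + u) / 2 - lam ^ 2 = u ^ 2 := by
      ring
    rw [e2, abs_of_nonneg (sq_nonneg u)]
    nlinarith [sq_abs u, abs_nonneg u]
  · have hu : u < 0 := by linarith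
    rw [abs_of_nonneg h1, abs_of_neg h2, abs_of_neg hu]
    rw [abs_le]
    constructor <;> nlinarith
  · have hu : 0 < u := by linarith
    rw [abs_of_neg h1, abs_of_nonneg h2, abs_of_pos hu]
    rw [abs_le]
    constructor <;> nlinarith
  · linarith

/-- The Plancherel density `r ↦ r tanh(π r)`. -/
noncomputable def pf : ℝ → ℝ := fun s => s * Real.tanh (π * s)

/-- The complex-valued Plancherel density. -/
noncomputable def pF : ℝ → ℂ := fun s => ((pf s : ℝ) : ℂ)

lemma pf_cont : Continuous pf := by
  have conttanh : Continuous Real.tanh := by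
    have e : Real.tanh = fun x => Real.sinh x / Real.cosh x :=
      funext fun x => Real.tanh_eq_sinh_div_cosh x
    rw [e]
    exact Real.continuous_sinh.div Real.continuous_cosh fun x => (Real.cosh_pos x).ne'
  exact continuous_id.mul (conttanh.comp (continuous_const.mul continuous_id))

lemma pF_cont : Continuous pF := Complex.continuous_ofReal.comp pf_cont

lemma pf_le (y : ℝ) : |pf y| ≤ |y| := by
  calc |pf y| = |y| * |Real.tanh (π * y)| := by rw [pf]; simp [abs_mul]
    _ ≤ |y| * 1 := mul_le_mul_of_nonneg_left (abs_tanh_le_one _) (abs_nonneg y)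
    _ = |y| := mul_one _

lemma pf_close (y : ℝ) : abs (pf y - |y|) ≤ 1 := tanh_close y

/-- Smoothing the Plancherel density `r tanh(π r)` against an integrable
kernel of total integral one with cubic decay:
`∫_{-λ}^{λ} ∫_ℝ h(t-r) r tanh(π r) dr dt = λ² + O(λ)`. -/
theorem smoothed_plancherel_integral (h : ℝ → ℂ) (hmeas : Measurable h)
    (hint : (∫ t : ℝ, h t) = 1) (C₁ : ℝ)
    (hdecay : ∀ t : ℝ, ‖h t‖ ≤ C₁ * (1 + |t|) ^ (-3 : ℤ)) :
    ∃ C : ℝ, 0 < C ∧ ∀ lam : ℝ, 1 ≤ lam →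
      ‖(∫ t in (-lam)..lam,
          ∫ s : ℝ, h (t - s) * ((s * Real.tanh (π * s) : ℝ) : ℂ))
        - ((lam : ℂ) ^ 2)‖ ≤ C * lam := by
  have hπ := Real.pi_pos
  have hC₁ : 0 ≤ C₁ := by
    have h0 := (norm_nonneg (h 0)).trans (hdecay 0)
    simpa using h0
  refine ⟨2 * π * C₁ + 1, by positivity, fun lam hlam => ?_⟩
  have hlam0 : (0:ℝ) < lam := by linarith
  have hle : -lam ≤ lam := by linarith
  -- decay estimates
  have hzpow : ∀ u : ℝ, ‖h u‖ * (1 + |u|) ≤ C₁ * (1 + u ^ 2)⁻¹ := by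
    intro u
    have h1 : (0:ℝ) < 1 + |u| := by positivity
    have e : (1 + |u|) ^ (-3 : ℤ) * (1 + |u|) = ((1 + |u|) ^ 2)⁻¹ := by
      rw [zpow_neg]
      rw [show ((1 + |u|) : ℝ) ^ (3 : ℤ) = (1 + |u|) ^ (3 : ℕ) by norm_cast]
      field_simp
    calc ‖h u‖ * (1 + |u|) ≤ C₁ * (1 + |u|) ^ (-3 : ℤ) * (1 + |u|) :=
          mul_le_mul_of_nonneg_right (hdecay u) h1.le
      _ = C₁ * ((1 + |u|) ^ 2)⁻¹ := by rw [mul_assoc, e]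
      _ ≤ C₁ * (1 + u ^ 2)⁻¹ := by
          apply mul_le_mul_of_nonneg_left _ hC₁
          apply inv_anti₀ (by positivity)
          nlinarith [sq_abs u, abs_nonneg u]
  have hb : Integrable (fun u : ℝ => C₁ * (1 + u ^ 2)⁻¹) :=
    integrable_inv_one_add_sq.const_mul C₁
  have hInt_h : Integrable h := by
    refine hb.mono' hmeas.aestronglyMeasurable (Filter.Eventually.of_forall fun u => ?_)
    calc ‖h u‖ ≤ ‖h u‖ * (1 + |u|) :=
          le_mul_of_one_le_right (norm_nonneg _) (le_add_of_nonneg_right (abs_nonneg u))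
      _ ≤ C₁ * (1 + u ^ 2)⁻¹ := hzpow u
  have hmeas1 : Measurable fun u : ℝ => ‖h u‖ * (1 + |u|) :=
    hmeas.norm.mul (measurable_const.add continuous_abs.measurable)
  have hInt_h1 : Integrable (fun u : ℝ => ‖h u‖ * (1 + |u|)) := by
    refine hb.mono' hmeas1.aestronglyMeasurable (Filter.Eventually.of_forall fun u => ?_)
    rw [Real.norm_eq_abs, abs_of_nonneg (by positivity)]
    exact hzpow u
  have hk : Integrable (fun s : ℝ => ‖h s‖ * (lam + |s|)) := by
    have h1 : Integrable (fun s : ℝ => lam * (‖h s‖ * (1 + |s|))) := hInt_h1.const_mul lam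
    refine h1.mono' ?_ (Filter.Eventually.of_forall fun s => ?_)
    · exact (hmeas.norm.mul
        (measurable_const.add continuous_abs.measurable)).aestronglyMeasurable
    · rw [Real.norm_eq_abs, abs_of_nonneg (by positivity)]
      nlinarith [norm_nonneg (h s), abs_nonneg s,
        mul_nonneg (mul_nonneg (by linarith : (0:ℝ) ≤ lam - 1) (norm_nonneg (h s))) (abs_nonneg s)]
  -- the restricted measure
  set μr : Measure ℝ := volume.restrict (Set.Ioc (-lam) lam) with hμr
  haveI : IsFiniteMeasure μr := by
    constructor
    rw [hμr, Measure.restrict_apply_univ]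
    exact measure_Ioc_lt_top
  have hm0 : Measurable (fun p : ℝ × ℝ => h p.2 * pF (p.1 - p.2)) :=
    (hmeas.comp measurable_snd).mul
      (pF_cont.measurable.comp (measurable_fst.sub measurable_snd))
  have hprodmeas : AEStronglyMeasurable (fun p : ℝ × ℝ => h p.2 * pF (p.1 - p.2))
      (μr.prod volume) := hm0.aestronglyMeasurable
  have hprod : Integrable (fun p : ℝ × ℝ => h p.2 * pF (p.1 - p.2)) (μr.prod volume) := by
    have hg : Integrable (fun p : ℝ × ℝ => (1:ℝ) * (‖h p.2‖ * (lam + |p.2|)))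
        (μr.prod volume) := (integrable_const (1:ℝ)).mul_prod hk
    refine hg.mono' hprodmeas ?_
    have heq : μr.prod volume
        = ((volume : Measure ℝ).prod (volume : Measure ℝ)).restrict ((Set.Ioc (-lam) lam) ×ˢ Set.univ) := by
      rw [hμr, ← Measure.prod_restrict, Measure.restrict_univ]
    rw [heq]
    filter_upwards [ae_restrict_mem (measurableSet_Ioc.prod MeasurableSet.univ)] with p hp
    have hp1 : |p.1| ≤ lam := abs_le.mpr ⟨hp.1.1.le, hp.1.2⟩
    have hFb : ‖pF (p.1 - p.2)‖ ≤ lam + |p.2| := by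
      rw [pF, Complex.norm_real, Real.norm_eq_abs]
      calc |pf (p.1 - p.2)| ≤ |p.1 - p.2| := pf_le _
        _ ≤ |p.1| + |p.2| := by simpa using norm_sub_le p.1 p.2
        _ ≤ lam + |p.2| := by linarith
    calc ‖h p.2 * pF (p.1 - p.2)‖ = ‖h p.2‖ * ‖pF (p.1 - p.2)‖ := norm_mul _ _
      _ ≤ ‖h p.2‖ * (lam + |p.2|) := mul_le_mul_of_nonneg_left hFb (norm_nonneg _)
      _ = 1 * (‖h p.2‖ * (lam + |p.2|)) := (one_mul _).symm
  -- the smoothed density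
  set ψ : ℝ → ℝ := fun u => ∫ t in (-lam)..lam, pf (t - u) with hψ
  have keyψ : ∀ u : ℝ, abs (ψ u - lam ^ 2) ≤ 2 * lam * (1 + |u|) := by
    intro u
    have i1 : IntervalIntegrable (fun t => pf (t - u)) volume (-lam) lam :=
      (pf_cont.comp (continuous_id.sub continuous_const)).intervalIntegrable _ _
    have i2 : IntervalIntegrable (fun t : ℝ => |t - u|) volume (-lam) lam :=
      (continuous_abs.comp (continuous_id.sub continuous_const)).intervalIntegrable _ _
    have e1 : ψ u = (∫ t in (-lam)..lam, (pf (t - u) - |t - u|))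
        + ∫ t in (-lam)..lam, |t - u| := by
      rw [hψ]
      rw [intervalIntegral.integral_sub i1 i2]
      ring
    have e2 : (∫ t in (-lam)..lam, |t - u|)
        = (lam - u) * |lam - u| / 2 - (-lam - u) * |-lam - u| / 2 := by
      rw [intervalIntegral.integral_comp_sub_right (fun t => |t|) u, integral_abs_eq]
    have b1 : abs (∫ t in (-lam)..lam, (pf (t - u) - |t - u|)) ≤ 2 * lam := by
      have hh := intervalIntegral.norm_integral_le_of_norm_le_const
        (C := 1) (f := fun t : ℝ => pf (t - u) - |t - u|) (a := -lam) (b := lam)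
        (fun x _ => by simpa [Real.norm_eq_abs] using pf_close (x - u))
      rw [Real.norm_eq_abs] at hh
      have : |lam - -lam| = 2 * lam := by rw [abs_of_nonneg (by linarith)]; ring
      rw [this, one_mul] at hh
      exact hh
    calc abs (ψ u - lam ^ 2)
        = abs ((∫ t in (-lam)..lam, (pf (t - u) - |t - u|))
            + ((lam - u) * |lam - u| / 2 - (-lam - u) * |-lam - u| / 2 - lam ^ 2)) := by
          rw [e1, e2]; congr 1; ring
      _ ≤ 2 * lam + 2 * lam * |u| :=
          le_trans (abs_add_le _ _) (add_le_add b1 (phi_close hlam))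
      _ = 2 * lam * (1 + |u|) := by ring
  -- inner integral rewrite
  have step1 : ∀ t : ℝ, (∫ s : ℝ, h (t - s) * pF s) = ∫ u : ℝ, h u * pF (t - u) := by
    intro t
    have h1 := MeasureTheory.integral_sub_left_eq_self
      (μ := (volume : Measure ℝ)) (fun x => h x * pF (t - x)) t
    simpa [sub_sub_cancel] using h1
  have inner2 : ∀ u : ℝ, (∫ t, h u * pF (t - u) ∂μr) = h u * ((ψ u : ℝ) : ℂ) := by
    intro u
    rw [MeasureTheory.integral_const_mul]
    congr 1
    rw [hμr]
    simp only [pF]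
    rw [← intervalIntegral.integral_of_le hle, intervalIntegral.integral_ofReal]
  have main : (∫ t in (-lam)..lam, ∫ s : ℝ, h (t - s) * pF s)
      = ∫ u : ℝ, h u * ((ψ u : ℝ) : ℂ) := by
    rw [intervalIntegral.integral_of_le hle]
    calc (∫ t in Set.Ioc (-lam) lam, ∫ s : ℝ, h (t - s) * pF s)
        = ∫ t, (∫ u : ℝ, h u * pF (t - u)) ∂μr := by
          rw [hμr]
          exact MeasureTheory.integral_congr_ae (Filter.Eventually.of_forall fun t => step1 t)
      _ = ∫ u : ℝ, ∫ t, h u * pF (t - u) ∂μr :=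
          MeasureTheory.integral_integral_swap hprod
      _ = ∫ u : ℝ, h u * ((ψ u : ℝ) : ℂ) :=
          MeasureTheory.integral_congr_ae (Filter.Eventually.of_forall fun u => inner2 u)
  have hψint : Integrable (fun u : ℝ => h u * ((ψ u : ℝ) : ℂ)) := by
    have h1 : Integrable (fun u : ℝ => ∫ t, h u * pF (t - u) ∂μr) volume :=
      (hprod.swap).integral_prod_left
    exact h1.congr (Filter.Eventually.of_forall fun u => inner2 u)
  -- conclude
  show ‖(∫ t in (-lam)..lam, ∫ s : ℝ, h (t - s) * pF s) - ((lam : ℂ) ^ 2)‖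
      ≤ (2 * π * C₁ + 1) * lam
  rw [main]
  have heq2 : (∫ u : ℝ, h u * ((ψ u : ℝ) : ℂ)) - ((lam : ℂ) ^ 2)
      = ∫ u : ℝ, h u * (((ψ u : ℝ) : ℂ) - ((lam : ℂ) ^ 2)) := by
    have h2 : Integrable (fun u : ℝ => h u * ((lam : ℂ) ^ 2)) := hInt_h.mul_const _
    rw [eq_comm]
    simp_rw [mul_sub]
    rw [integral_sub hψint h2, MeasureTheory.integral_mul_const, hint, one_mul]
  rw [heq2]
  have hbound : ∀ u : ℝ, ‖h u * (((ψ u : ℝ) : ℂ) - ((lam : ℂ) ^ 2))‖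
      ≤ (2 * lam) * (‖h u‖ * (1 + |u|)) := by
    intro u
    rw [norm_mul]
    have e : ((ψ u : ℝ) : ℂ) - ((lam : ℂ) ^ 2) = (((ψ u - lam ^ 2 : ℝ)) : ℂ) := by
      push_cast; ring
    rw [e, Complex.norm_real, Real.norm_eq_abs]
    calc ‖h u‖ * |ψ u - lam ^ 2| ≤ ‖h u‖ * (2 * lam * (1 + |u|)) :=
        mul_le_mul_of_nonneg_left (keyψ u) (norm_nonneg _)
      _ = (2 * lam) * (‖h u‖ * (1 + |u|)) := by ring
  calc ‖∫ u : ℝ, h u * (((ψ u : ℝ) : ℂ) - ((lam : ℂ) ^ 2))‖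
      ≤ ∫ u : ℝ, (2 * lam) * (‖h u‖ * (1 + |u|)) :=
        MeasureTheory.norm_integral_le_of_norm_le (hInt_h1.const_mul _)
          (Filter.Eventually.of_forall hbound)
    _ ≤ ∫ u : ℝ, (2 * lam) * (C₁ * (1 + u ^ 2)⁻¹) :=
        integral_mono (hInt_h1.const_mul _) (hb.const_mul _)
          (fun u => mul_le_mul_of_nonneg_left (hzpow u) (by positivity))
    _ = (2 * lam) * (C₁ * π) := by
        rw [MeasureTheory.integral_const_mul]
        congr 1
        rw [MeasureTheory.integral_const_mul, integral_univ_inv_one_add_sq]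
    _ ≤ (2 * π * C₁ + 1) * lam := by nlinarith
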